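/- For n ≥ 3 and any prime power q, any t-(n,n-1,q)_q subspace packing with t = n-2 (allowing repeated blocks) has at most q^{n-1} blocks, i.e. A^r_q(n,n-1,n-2;q) ≤ q^{n-1}. -/

import Mathlib

open scoped Classical

def gaussBinom (q : ℕ) : ℕ → ℕ → ℕ
  | _, 0 => 1
  | 0, _ + 1 => 0
  | n + 1, k + 1 => gaussBinom q n k + q ^ (k + 1) * gaussBinom q n (k + 1)

def IsPacking (F : Type) [Field F] [Fintype F] (n k t lam : ℕ)
    (S : Finset (Submodule F (Fin n → F))) : Prop :=
  (∀ U ∈ S, Module.finrank F U = k) ∧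
    ∀ T : Submodule F (Fin n → F), Module.finrank F T = t →
      (S.filter fun U => T ≤ U).card ≤ lam

noncomputable def packingNumber (F : Type) [Field F] [Fintype F] (n k t lam : ℕ) : ℕ :=
  sSup {m | ∃ S : Finset (Submodule F (Fin n → F)), IsPacking F n k t lam S ∧ S.card = m}

def IsRPacking (F : Type) [Field F] [Fintype F] (n k t lam : ℕ)
    (S : Multiset (Submodule F (Fin n → F))) : Prop :=
  (∀ U ∈ S, Module.finrank F U = k) ∧
    ∀ T : Submodule F (Fin n → F), Module.finrank F T = t →
      (S.countP fun U => T ≤ U) ≤ lam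

noncomputable def rPackingNumber (F : Type) [Field F] [Fintype F] (n k t lam : ℕ) : ℕ :=
  sSup {m | ∃ S : Multiset (Submodule F (Fin n → F)), IsRPacking F n k t lam S ∧ Multiset.card S = m}

set_option linter.unusedSectionVars false

section AuxStmt8

open Module Submodule

variable {F : Type} [Field F] [Fintype F] {n : ℕ}

lemma inf_finrank (hn : 3 ≤ n) {U U₀ : Submodule F (Fin n → F)}
    (hU : finrank F U = n - 1) (hU₀ : finrank F U₀ = n - 1) (hne : U ≠ U₀) :
    finrank F ↥(U ⊓ U₀) = n - 2 := by
  have hamb : finrank F (Fin n → F) = n := Module.finrank_fin_fun F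
  have hsum := Submodule.finrank_sup_add_finrank_inf_eq U U₀
  have hle : finrank F ↥(U ⊔ U₀) ≤ n := (Submodule.finrank_le _).trans_eq hamb
  have hgt : ¬ (finrank F ↥(U ⊔ U₀) ≤ n - 1) := by
    intro h
    have h1 : U = U ⊔ U₀ := Submodule.eq_of_le_of_finrank_le le_sup_left (by omega)
    have h2 : U₀ ≤ U := h1 ▸ le_sup_right
    exact hne (Submodule.eq_of_le_of_finrank_eq h2 (by omega)).symm
  rw [hU, hU₀] at hsum
  omega

lemma exists_functional (hn : 3 ≤ n) {U₀ : Submodule F (Fin n → F)}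
    (hU₀ : finrank F ↥U₀ = n - 1) {T : Submodule F (Fin n → F)} (hTle : T ≤ U₀)
    (hT : finrank F ↥T = n - 2) :
    ∃ f : ↥U₀ →ₗ[F] F, f ≠ 0 ∧ LinearMap.ker f = comap U₀.subtype T := by
  set W := comap U₀.subtype T with hWdef
  have hW : finrank F ↥W = n - 2 := by
    rw [← hT]; exact LinearEquiv.finrank_eq (comapSubtypeEquivOfLe hTle)
  have hqd : finrank F (↥U₀ ⧸ W) = 1 := by
    have := Submodule.finrank_quotient_add_finrank W
    rw [hU₀, hW] at this; omega
  obtain ⟨e⟩ := FiniteDimensional.nonempty_linearEquiv_of_finrank_eq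
    (hqd.trans (Module.finrank_self F).symm)
  have hker : LinearMap.ker (e.toLinearMap ∘ₗ W.mkQ) = W := by
    rw [LinearMap.ker_comp, LinearEquiv.ker, Submodule.comap_bot, Submodule.ker_mkQ]
  refine ⟨e.toLinearMap ∘ₗ W.mkQ, ?_, hker⟩
  intro h0
  have hWtop : W = ⊤ := by rw [← hker, h0, LinearMap.ker_zero]
  have : finrank F ↥W = n - 1 := by rw [hWtop, finrank_top]; exact hU₀
  omega

lemma exists_sub (hn : 3 ≤ n) {U₀ : Submodule F (Fin n → F)}
    (hU₀ : finrank F ↥U₀ = n - 1) :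
    ∃ T₀ : Submodule F (Fin n → F), T₀ ≤ U₀ ∧ finrank F ↥T₀ = n - 2 := by
  have hpos : 0 < finrank F ↥U₀ := by omega
  obtain ⟨x, hx⟩ := Module.finrank_pos_iff_exists_ne_zero.mp hpos
  obtain ⟨φ, hφ⟩ : ∃ φ : Module.Dual F ↥U₀, φ x ≠ 0 := by
    by_contra h; push_neg at h
    exact hx ((Module.forall_dual_apply_eq_zero_iff F x).mp h)
  refine ⟨map U₀.subtype (LinearMap.ker φ), Submodule.map_subtype_le _ _, ?_⟩
  rw [Submodule.finrank_map_subtype_eq]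
  have hrn := LinearMap.finrank_range_add_finrank_ker φ
  have hrange : finrank F ↥(LinearMap.range φ) = 1 := by
    have hle1 : finrank F ↥(LinearMap.range φ) ≤ 1 := by
      have h := Submodule.finrank_le (LinearMap.range φ)
      rwa [Module.finrank_self] at h
    have hpos' : 0 < finrank F ↥(LinearMap.range φ) :=
      Module.finrank_pos_iff_exists_ne_zero.mpr
        ⟨⟨φ x, LinearMap.mem_range_self φ x⟩, by simpa using hφ⟩
    omega
  rw [hU₀, hrange] at hrn
  omega

lemma count_hyperplanes {q : ℕ} (hq : Fintype.card F = q) (hn : 3 ≤ n)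
    {U₀ : Submodule F (Fin n → F)} (hU₀ : finrank F ↥U₀ = n - 1)
    (𝒯 : Finset (Submodule F (Fin n → F)))
    (h𝒯 : ∀ T ∈ 𝒯, T ≤ U₀ ∧ finrank F ↥T = n - 2) :
    𝒯.card * (q - 1) ≤ q ^ (n - 1) - 1 := by
  haveI : Finite (↥U₀ →ₗ[F] F) := Finite.of_injective _ DFunLike.coe_injective
  haveI : Fintype (↥U₀ →ₗ[F] F) := Fintype.ofFinite _
  have hcard : Fintype.card (↥U₀ →ₗ[F] F) = q ^ (n - 1) := by
    rw [card_eq_pow_finrank (K := F), hq, Module.finrank_linearMap, hU₀,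
      Module.finrank_self, mul_one]
  choose g hg0 hgker using fun (T : 𝒯) =>
    exists_functional hn hU₀ (h𝒯 T.1 T.2).1 (h𝒯 T.1 T.2).2
  classical
  let P : Finset ({T // T ∈ 𝒯} × F) := Finset.univ ×ˢ (Finset.univ.erase (0 : F))
  let φ : {T // T ∈ 𝒯} × F → (↥U₀ →ₗ[F] F) := fun p => p.2 • g p.1
  have hsmul_ne : ∀ (T : {T // T ∈ 𝒯}) (c : F), c ≠ 0 → c • g T ≠ 0 := by
    intro T c hc h0
    apply hg0 T
    have := congrArg (fun h : ↥U₀ →ₗ[F] F => c⁻¹ • h) h0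
    simpa [smul_smul, inv_mul_cancel₀ hc] using this
  have hmaps : ∀ p ∈ P, φ p ∈ Finset.univ.erase (0 : ↥U₀ →ₗ[F] F) := by
    rintro ⟨T, c⟩ hp
    have hc : c ≠ 0 := (Finset.mem_erase.1 (Finset.mem_product.1 hp).2).1
    exact Finset.mem_erase.2 ⟨hsmul_ne T c hc, Finset.mem_univ _⟩
  have hinj : Set.InjOn φ P := by
    rintro ⟨T, c⟩ hp ⟨T', c'⟩ hp' heq
    have hc : c ≠ 0 := (Finset.mem_erase.1 (Finset.mem_product.1 hp).2).1
    have hc' : c' ≠ 0 := (Finset.mem_erase.1 (Finset.mem_product.1 hp').2).1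
    have hkeq : LinearMap.ker (g T) = LinearMap.ker (g T') := by
      have h1 : LinearMap.ker (c • g T) = LinearMap.ker (c' • g T') := by
        simpa [φ] using congrArg LinearMap.ker heq
      rwa [LinearMap.ker_smul _ _ hc, LinearMap.ker_smul _ _ hc'] at h1
    have hTT' : T = T' := by
      have h2 : comap U₀.subtype T.1 = comap U₀.subtype T'.1 := by
        rw [← hgker T, ← hgker T', hkeq]
      have h3 := congrArg (map U₀.subtype) h2
      rw [Submodule.map_comap_subtype, Submodule.map_comap_subtype,
        inf_eq_right.2 (h𝒯 T.1 T.2).1, inf_eq_right.2 (h𝒯 T'.1 T'.2).1] at h3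
      exact Subtype.ext h3
    subst hTT'
    have hcc : c = c' := by
      by_contra hne
      apply hg0 T
      have hsub : (c - c') • g T = 0 := by
        have : c • g T = c' • g T := heq
        exact (sub_smul c c' (g T)).trans (sub_eq_zero.mpr this)
      have := congrArg (fun h : ↥U₀ →ₗ[F] F => (c - c')⁻¹ • h) hsub
      simpa [smul_smul, inv_mul_cancel₀ (sub_ne_zero.2 hne)] using this
    rw [hcc]
  have hle := Finset.card_le_card_of_injOn φ hmaps hinj
  have hPcard : P.card = 𝒯.card * (q - 1) := by
    rw [Finset.card_product, Finset.card_univ, Fintype.card_coe,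
      Finset.card_erase_of_mem (Finset.mem_univ _), Finset.card_univ, hq]
  have htarget : (Finset.univ.erase (0 : ↥U₀ →ₗ[F] F)).card = q ^ (n - 1) - 1 := by
    rw [Finset.card_erase_of_mem (Finset.mem_univ _), Finset.card_univ, hcard]
  rw [hPcard, htarget] at hle
  exact hle

lemma key {q : ℕ} (hq : Fintype.card F = q) (hn : 3 ≤ n)
    (S : Multiset (Submodule F (Fin n → F))) (hS : IsRPacking F n (n-1) (n-2) q S) :
    Multiset.card S ≤ q ^ (n - 1) := by
  obtain ⟨hdim, hpack⟩ := hS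
  by_cases hS0 : S = 0
  · simp [hS0]
  obtain ⟨U₀, hU₀S⟩ := Multiset.exists_mem_of_ne_zero hS0
  have hq2 : 2 ≤ q := hq ▸ Fintype.one_lt_card
  have hU₀ : finrank F ↥U₀ = n - 1 := hdim U₀ hU₀S
  set p : Submodule F (Fin n → F) → Prop := fun U => U = U₀ with hp
  set m := S.countP p with hm
  set S' := S.filter (fun U => ¬ p U) with hS'
  have hcardsplit : Multiset.card S = m + Multiset.card S' := by
    rw [Multiset.card_eq_countP_add_countP p, hS', hm,
      Multiset.countP_eq_card_filter (fun x => ¬ p x)]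
  have hm1 : 1 ≤ m := Multiset.countP_pos_of_mem hU₀S rfl
  -- m bounded via any (n-2)-dim subspace of U₀
  have hmle : ∀ T : Submodule F (Fin n → F), T ≤ U₀ → m ≤ S.countP (fun U => T ≤ U) := by
    intro T hT
    rw [hm, Multiset.countP_eq_card_filter, Multiset.countP_eq_card_filter]
    exact Multiset.card_le_card (Multiset.monotone_filter_right S
      (fun U hU => by rw [hp] at hU; exact hU ▸ hT))
  obtain ⟨T₀, hT₀le, hT₀rank⟩ := exists_sub hn hU₀
  have hmq : m ≤ q := le_trans (hmle T₀ hT₀le) (hpack T₀ hT₀rank)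
  set f : Submodule F (Fin n → F) → Submodule F (Fin n → F) := fun U => U ⊓ U₀ with hf
  set 𝒯 := (S'.map f).toFinset with h𝒯
  have h𝒯prop : ∀ T ∈ 𝒯, T ≤ U₀ ∧ finrank F ↥T = n - 2 := by
    intro T hT
    rw [h𝒯, Multiset.mem_toFinset, Multiset.mem_map] at hT
    obtain ⟨U, hUS', rfl⟩ := hT
    have hUS : U ∈ S := Multiset.mem_of_mem_filter hUS'
    have hUne : U ≠ U₀ := (Multiset.mem_filter.1 hUS').2
    exact ⟨inf_le_right, inf_finrank hn (hdim U hUS) hU₀ hUne⟩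
  have hS'card : Multiset.card S' = ∑ T ∈ 𝒯, S'.countP (fun U => T = f U) := by
    calc Multiset.card S' = Multiset.card (S'.map f) := (Multiset.card_map f S').symm
      _ = ∑ T ∈ 𝒯, (S'.map f).count T := (Multiset.toFinset_sum_count_eq _).symm
      _ = ∑ T ∈ 𝒯, S'.countP (fun U => T = f U) := by
          refine Finset.sum_congr rfl (fun T _ => ?_)
          rw [Multiset.count_map, Multiset.countP_eq_card_filter]
  have hfiber : ∀ T ∈ 𝒯, S'.countP (fun U => T = f U) ≤ q - m := by
    intro T hT
    obtain ⟨hTle, hTrank⟩ := h𝒯prop T hT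
    have h1 : S'.countP (fun U => T = f U) ≤ S'.countP (fun U => T ≤ U) := by
      rw [Multiset.countP_eq_card_filter, Multiset.countP_eq_card_filter]
      exact Multiset.card_le_card (Multiset.monotone_filter_right S'
        (fun U hU => hU ▸ inf_le_left))
    have h2 : m + S'.countP (fun U => T ≤ U) ≤ S.countP (fun U => T ≤ U) := by
      have hsplit : S.filter p + S' = S := Multiset.filter_add_not p S
      have : S.countP (fun U => T ≤ U)
          = (S.filter p).countP (fun U => T ≤ U) + S'.countP (fun U => T ≤ U) := by
        conv_lhs => rw [← hsplit]
        rw [Multiset.countP_add]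
      rw [this]
      have hall : (S.filter p).countP (fun U => T ≤ U) = Multiset.card (S.filter p) :=
        Multiset.countP_eq_card.2 (fun U hU => by
          have : p U := (Multiset.mem_filter.1 hU).2
          exact this ▸ hTle)
      have hmcard : Multiset.card (S.filter p) = m := by
        rw [hm, Multiset.countP_eq_card_filter]
      omega
    have h3 := hpack T hTrank
    omega
  have hS'le : Multiset.card S' ≤ 𝒯.card * (q - m) := by
    rw [hS'card]
    calc ∑ T ∈ 𝒯, S'.countP (fun U => T = f U) ≤ ∑ _T ∈ 𝒯, (q - m) :=
        Finset.sum_le_sum hfiber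
      _ = 𝒯.card * (q - m) := by rw [Finset.sum_const, smul_eq_mul]
  have hcount : 𝒯.card * (q - 1) ≤ q ^ (n - 1) - 1 := count_hyperplanes hq hn hU₀ 𝒯 h𝒯prop
  -- final arithmetic
  have hN : q ≤ q ^ (n - 1) := Nat.le_self_pow (by omega) q
  rcases Nat.eq_zero_or_pos 𝒯.card with ht0 | ht1
  · rw [ht0] at hS'le; omega
  · have e1 : (q - m) + (m - 1) = q - 1 := by omega
    have e2 : 𝒯.card * (q - m) + 𝒯.card * (m - 1) = 𝒯.card * (q - 1) := by
      rw [← Nat.mul_add, e1]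
    have e3 : m - 1 ≤ 𝒯.card * (m - 1) := Nat.le_mul_of_pos_left _ ht1
    omega

end AuxStmt8

theorem stmt8 (q n : ℕ) (F : Type) [Field F] [Fintype F] (hq : Fintype.card F = q)
    (hn : 3 ≤ n) :
    rPackingNumber F n (n - 1) (n - 2) q ≤ q ^ (n - 1) := by
  refine csSup_le' ?_
  rintro m ⟨S, hS, rfl⟩
  exact key hq hn S hS
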